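/- If the propositional formula CNFtoPropF (MakeCNF (MakeNNF A)) is provable in Nc, then A is provable in Nc; consequently, completeness of Nc reduces to the chain of lemmas about NNF and CNF transformations. -/

import Mathlib

inductive PropF (V : Type) : Type
  | Var : V → PropF V
  | Bot : PropF V
  | Conj : PropF V → PropF V → PropF V
  | Disj : PropF V → PropF V → PropF V
  | Impl : PropF V → PropF V → PropF V
deriving DecidableEq

variable {V : Type} [DecidableEq V]

def PropF.Neg (A : PropF V) : PropF V := A.Impl .Bot
def PropF.Top : PropF V := PropF.Neg .Bot

def TrueQ (v : V → Bool) : PropF V → Bool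
  | .Var p => v p
  | .Bot => false
  | .Conj B C => TrueQ v B && TrueQ v C
  | .Disj B C => TrueQ v B || TrueQ v C
  | .Impl B C => !(TrueQ v B) || TrueQ v C

def Satisfies (v : V → Bool) (Γ : List (PropF V)) : Prop := ∀ A ∈ Γ, TrueQ v A = true
def Models (Γ : List (PropF V)) (A : PropF V) : Prop := ∀ v, Satisfies v Γ → TrueQ v A = true
def Valid (A : PropF V) : Prop := Models [] A
def Validates (v : V → Bool) (Δ : List (PropF V)) : Prop := ∃ A ∈ Δ, TrueQ v A = true

inductive Nc : List (PropF V) → PropF V → Prop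
  | Nax (Γ : List (PropF V)) (A : PropF V) : A ∈ Γ → Nc Γ A
  | ImpI (Γ : List (PropF V)) (A B : PropF V) : Nc (A :: Γ) B → Nc Γ (A.Impl B)
  | ImpE (Γ : List (PropF V)) (A B : PropF V) : Nc Γ (A.Impl B) → Nc Γ A → Nc Γ B
  | BotC (Γ : List (PropF V)) (A : PropF V) : Nc (A.Neg :: Γ) .Bot → Nc Γ A
  | AndI (Γ : List (PropF V)) (A B : PropF V) : Nc Γ A → Nc Γ B → Nc Γ (A.Conj B)
  | AndE1 (Γ : List (PropF V)) (A B : PropF V) : Nc Γ (A.Conj B) → Nc Γ A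
  | AndE2 (Γ : List (PropF V)) (A B : PropF V) : Nc Γ (A.Conj B) → Nc Γ B
  | OrI1 (Γ : List (PropF V)) (A B : PropF V) : Nc Γ A → Nc Γ (A.Disj B)
  | OrI2 (Γ : List (PropF V)) (A B : PropF V) : Nc Γ B → Nc Γ (A.Disj B)
  | OrE (Γ : List (PropF V)) (A B C : PropF V) : Nc Γ (A.Disj B) → Nc (A :: Γ) C → Nc (B :: Γ) C → Nc Γ C

def Provable (A : PropF V) : Prop := Nc [] A

inductive NNF (V : Type) : Type
  | NPos : V → NNF V
  | NNeg : V → NNF V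
  | NBot : NNF V
  | NTop : NNF V
  | NConj : NNF V → NNF V → NNF V
  | NDisj : NNF V → NNF V → NNF V
deriving DecidableEq

def NNFtoPropF : NNF V → PropF V
  | .NPos p => .Var p
  | .NNeg p => (PropF.Var p).Neg
  | .NBot => .Bot
  | .NTop => PropF.Top
  | .NConj B C => (NNFtoPropF B).Conj (NNFtoPropF C)
  | .NDisj B C => (NNFtoPropF B).Disj (NNFtoPropF C)

mutual
def MakeNNF : PropF V → NNF V
  | .Var p => .NPos p
  | .Bot => .NBot
  | .Disj B C => .NDisj (MakeNNF B) (MakeNNF C)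
  | .Conj B C => .NConj (MakeNNF B) (MakeNNF C)
  | .Impl B C => .NDisj (MakeNNFN B) (MakeNNF C)
def MakeNNFN : PropF V → NNF V
  | .Var p => .NNeg p
  | .Bot => .NTop
  | .Disj B C => .NConj (MakeNNFN B) (MakeNNFN C)
  | .Conj B C => .NDisj (MakeNNFN B) (MakeNNFN C)
  | .Impl B C => .NConj (MakeNNF B) (MakeNNFN C)
end

inductive Lit (V : Type) : Type
  | LPos : V → Lit V
  | LNeg : V → Lit V
  | LBot : Lit V
  | LTop : Lit V
deriving DecidableEq

def LiteraltoPropF : Lit V → PropF V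
  | .LPos p => .Var p
  | .LNeg p => (PropF.Var p).Neg
  | .LBot => .Bot
  | .LTop => PropF.Top

abbrev Clause (V : Type) : Type := List (Lit V)
abbrev CNF (V : Type) : Type := List (Clause V)

abbrev ClausetoPropF (l : Clause V) : PropF V :=
  l.foldr (fun a r => (LiteraltoPropF a).Disj r) .Bot

def CNFtoPropF (ll : CNF V) : PropF V :=
  ll.foldr (fun c r => (ClausetoPropF c).Conj r) PropF.Top

def AddClause (l : Clause V) (ll : CNF V) : CNF V := ll.map (fun l2 => l ++ l2)
def Disjunct (ll ll2 : CNF V) : CNF V := ll.flatMap (fun l => AddClause l ll2)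

def MakeCNF : NNF V → CNF V
  | .NPos p => [[.LPos p]]
  | .NNeg p => [[.LNeg p]]
  | .NBot => [[.LBot]]
  | .NTop => [[.LTop]]
  | .NConj B C => MakeCNF B ++ MakeCNF C
  | .NDisj B C => Disjunct (MakeCNF B) (MakeCNF C)

def Valid_Clause (l : Clause V) : Prop :=
  Lit.LTop ∈ l ∨ ∃ p, Lit.LPos p ∈ l ∧ Lit.LNeg p ∈ l
def Valid_CNF (ll : CNF V) : Prop := ∀ l ∈ ll, Valid_Clause l

inductive AxiomH : PropF V → Prop
  | HOrI1 (A B : PropF V) : AxiomH (A.Impl (A.Disj B))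
  | HOrI2 (A B : PropF V) : AxiomH (B.Impl (A.Disj B))
  | HAndI (A B : PropF V) : AxiomH (A.Impl (B.Impl (A.Conj B)))
  | HOrE (A B C : PropF V) : AxiomH ((A.Disj B).Impl ((A.Impl C).Impl ((B.Impl C).Impl C)))
  | HAndE1 (A B : PropF V) : AxiomH ((A.Conj B).Impl A)
  | HAndE2 (A B : PropF V) : AxiomH ((A.Conj B).Impl B)
  | HS (A B C : PropF V) : AxiomH ((A.Impl (B.Impl C)).Impl ((A.Impl B).Impl (A.Impl C)))
  | HK (A B : PropF V) : AxiomH (A.Impl (B.Impl A))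
  | HClas (A : PropF V) : AxiomH ((A.Neg.Neg).Impl A)

inductive Hc : List (PropF V) → PropF V → Prop
  | Hass (A : PropF V) (Γ : List (PropF V)) : A ∈ Γ → Hc Γ A
  | Hax (A : PropF V) (Γ : List (PropF V)) : AxiomH A → Hc Γ A
  | HImpE (Γ : List (PropF V)) (A B : PropF V) : Hc Γ (A.Impl B) → Hc Γ A → Hc Γ B

inductive G : List (PropF V) → List (PropF V) → Prop
  | Gax (A : PropF V) (Γ Δ : List (PropF V)) : A ∈ Γ → A ∈ Δ → G Γ Δ
  | GBot (Γ Δ : List (PropF V)) : PropF.Bot ∈ Γ → G Γ Δ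
  | AndL (A B : PropF V) (Γ1 Γ2 Δ : List (PropF V)) : G (Γ1 ++ A :: B :: Γ2) Δ → G (Γ1 ++ (A.Conj B) :: Γ2) Δ
  | AndR (A B : PropF V) (Γ Δ1 Δ2 : List (PropF V)) : G Γ (Δ1 ++ A :: Δ2) → G Γ (Δ1 ++ B :: Δ2) → G Γ (Δ1 ++ (A.Conj B) :: Δ2)
  | OrL (A B : PropF V) (Γ1 Γ2 Δ : List (PropF V)) : G (Γ1 ++ A :: Γ2) Δ → G (Γ1 ++ B :: Γ2) Δ → G (Γ1 ++ (A.Disj B) :: Γ2) Δ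
  | OrR (A B : PropF V) (Γ Δ1 Δ2 : List (PropF V)) : G Γ (Δ1 ++ A :: B :: Δ2) → G Γ (Δ1 ++ (A.Disj B) :: Δ2)
  | ImpL (A B : PropF V) (Γ1 Γ2 Δ : List (PropF V)) : G (Γ1 ++ B :: Γ2) Δ → G (Γ1 ++ Γ2) (A :: Δ) → G (Γ1 ++ (A.Impl B) :: Γ2) Δ
  | ImpR (A B : PropF V) (Γ Δ1 Δ2 : List (PropF V)) : G (A :: Γ) (Δ1 ++ B :: Δ2) → G Γ (Δ1 ++ (A.Impl B) :: Δ2)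
  | Cut (A : PropF V) (Γ Δ : List (PropF V)) : G Γ (A :: Δ) → G (A :: Γ) Δ → G Γ Δ

inductive Gcf : List (PropF V) → List (PropF V) → Prop
  | Gax (p : V) (Γ Δ : List (PropF V)) : PropF.Var p ∈ Γ → PropF.Var p ∈ Δ → Gcf Γ Δ
  | GBot (Γ Δ : List (PropF V)) : PropF.Bot ∈ Γ → Gcf Γ Δ
  | AndL (A B : PropF V) (Γ1 Γ2 Δ : List (PropF V)) : Gcf (Γ1 ++ A :: B :: Γ2) Δ → Gcf (Γ1 ++ (A.Conj B) :: Γ2) Δ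
  | AndR (A B : PropF V) (Γ Δ1 Δ2 : List (PropF V)) : Gcf Γ (Δ1 ++ A :: Δ2) → Gcf Γ (Δ1 ++ B :: Δ2) → Gcf Γ (Δ1 ++ (A.Conj B) :: Δ2)
  | OrL (A B : PropF V) (Γ1 Γ2 Δ : List (PropF V)) : Gcf (Γ1 ++ A :: Γ2) Δ → Gcf (Γ1 ++ B :: Γ2) Δ → Gcf (Γ1 ++ (A.Disj B) :: Γ2) Δ
  | OrR (A B : PropF V) (Γ Δ1 Δ2 : List (PropF V)) : Gcf Γ (Δ1 ++ A :: B :: Δ2) → Gcf Γ (Δ1 ++ (A.Disj B) :: Δ2)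
  | ImpL (A B : PropF V) (Γ1 Γ2 Δ : List (PropF V)) : Gcf (Γ1 ++ B :: Γ2) Δ → Gcf (Γ1 ++ Γ2) (A :: Δ) → Gcf (Γ1 ++ (A.Impl B) :: Γ2) Δ
  | ImpR (A B : PropF V) (Γ Δ1 Δ2 : List (PropF V)) : Gcf (A :: Γ) (Δ1 ++ B :: Δ2) → Gcf Γ (Δ1 ++ (A.Impl B) :: Δ2)

def BigOr (Δ : List (PropF V)) : PropF V := Δ.foldr PropF.Disj .Bot

def size : PropF V → Nat
  | .Var _ => 0
  | .Bot => 0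
  | .Conj B C => (size B + size C).succ
  | .Disj B C => (size B + size C).succ
  | .Impl B C => (size B + size C).succ

def sizel (Γ : List (PropF V)) : Nat := (Γ.map size).sum
def sizes (Γ Δ : List (PropF V)) : Nat := sizel Γ + sizel Δ

section Aux
variable {V : Type} [DecidableEq V]

theorem Nc.weak {Γ Δ : List (PropF V)} {A : PropF V} (h : Nc Γ A) (s : Γ ⊆ Δ) : Nc Δ A := by
  induction h generalizing Δ with
  | Nax _ _ hA => exact .Nax _ _ (s hA)
  | ImpI _ _ _ _ ih => exact .ImpI _ _ _ (ih (List.cons_subset_cons _ s))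
  | ImpE _ _ _ _ _ ih1 ih2 => exact .ImpE _ _ _ (ih1 s) (ih2 s)
  | BotC _ _ _ ih => exact .BotC _ _ (ih (List.cons_subset_cons _ s))
  | AndI _ _ _ _ _ ih1 ih2 => exact .AndI _ _ _ (ih1 s) (ih2 s)
  | AndE1 _ _ _ _ ih => exact .AndE1 _ _ _ (ih s)
  | AndE2 _ _ _ _ ih => exact .AndE2 _ _ _ (ih s)
  | OrI1 _ _ _ _ ih => exact .OrI1 _ _ _ (ih s)
  | OrI2 _ _ _ _ ih => exact .OrI2 _ _ _ (ih s)
  | OrE _ _ _ _ _ _ _ ih1 ih2 ih3 =>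
      exact .OrE _ _ _ _ (ih1 s) (ih2 (List.cons_subset_cons _ s))
        (ih3 (List.cons_subset_cons _ s))

theorem Nc.hyp {Γ : List (PropF V)} {A : PropF V} (h : A ∈ Γ) : Nc Γ A := .Nax _ _ h

theorem Nc.efq {Γ : List (PropF V)} {A : PropF V} (h : Nc Γ .Bot) : Nc Γ A :=
  .BotC _ _ (h.weak (List.subset_cons_self _ _))

theorem Nc.top (Γ : List (PropF V)) : Nc Γ (PropF.Top : PropF V) :=
  .ImpI _ _ _ (.Nax _ _ List.mem_cons_self)

theorem clause_append (l c : Clause V) (Γ : List (PropF V)) :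
    Nc Γ ((ClausetoPropF (l ++ c)).Impl ((ClausetoPropF l).Disj (ClausetoPropF c))) := by
  induction l generalizing Γ with
  | nil =>
      apply Nc.ImpI
      exact Nc.OrI2 _ _ _ (Nc.hyp (by simp))
  | cons a l ih =>
      apply Nc.ImpI
      apply Nc.OrE _ (LiteraltoPropF a) (ClausetoPropF (l ++ c)) _ (Nc.hyp (by simp))
      · exact Nc.OrI1 _ _ _ (Nc.OrI1 _ _ _ (Nc.hyp (by simp)))
      · apply Nc.OrE _ (ClausetoPropF l) (ClausetoPropF c) _
          (Nc.ImpE _ _ _ (ih _) (Nc.hyp (by simp)))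
        · exact Nc.OrI1 _ _ _ (Nc.OrI2 _ _ _ (Nc.hyp (by simp)))
        · exact Nc.OrI2 _ _ _ (Nc.hyp (by simp))

theorem cnf_append (l1 l2 : CNF V) (Γ : List (PropF V)) :
    Nc Γ ((CNFtoPropF (l1 ++ l2)).Impl ((CNFtoPropF l1).Conj (CNFtoPropF l2))) := by
  induction l1 generalizing Γ with
  | nil =>
      apply Nc.ImpI
      exact Nc.AndI _ _ _ (Nc.top _) (Nc.hyp (by simp))
  | cons c ls ih =>
      apply Nc.ImpI
      have h0 : Nc (CNFtoPropF ((c :: ls) ++ l2) :: Γ)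
          ((ClausetoPropF c).Conj (CNFtoPropF (ls ++ l2))) :=
        Nc.hyp (by simp [CNFtoPropF])
      have hc := Nc.AndE1 _ _ _ h0
      have hrest : Nc (CNFtoPropF ((c :: ls) ++ l2) :: Γ)
          ((CNFtoPropF ls).Conj (CNFtoPropF l2)) :=
        Nc.ImpE _ _ _ (ih _) (Nc.AndE2 _ _ _ h0)
      exact Nc.AndI _ _ _ (Nc.AndI _ _ _ hc (Nc.AndE1 _ _ _ hrest)) (Nc.AndE2 _ _ _ hrest)

theorem addclause (l : Clause V) (ll : CNF V) (Γ : List (PropF V)) :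
    Nc Γ ((CNFtoPropF (AddClause l ll)).Impl ((ClausetoPropF l).Disj (CNFtoPropF ll))) := by
  induction ll generalizing Γ with
  | nil =>
      apply Nc.ImpI
      exact Nc.OrI2 _ _ _ (Nc.top _)
  | cons c cs ih =>
      apply Nc.ImpI
      have h0 : Nc (CNFtoPropF (AddClause l (c :: cs)) :: Γ)
          ((ClausetoPropF (l ++ c)).Conj (CNFtoPropF (AddClause l cs))) :=
        Nc.hyp (by simp [AddClause, CNFtoPropF])
      have hlc : Nc (CNFtoPropF (AddClause l (c :: cs)) :: Γ)
          ((ClausetoPropF l).Disj (ClausetoPropF c)) :=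
        Nc.ImpE _ _ _ (clause_append _ _ _) (Nc.AndE1 _ _ _ h0)
      apply Nc.OrE _ _ _ _ hlc
      · exact Nc.OrI1 _ _ _ (Nc.hyp (by simp))
      · have hrest : Nc (ClausetoPropF c :: CNFtoPropF (AddClause l (c :: cs)) :: Γ)
            ((ClausetoPropF l).Disj (CNFtoPropF cs)) :=
          Nc.ImpE _ _ _ (ih _)
            (Nc.AndE2 _ _ _ (h0.weak (List.subset_cons_self _ _)))
        apply Nc.OrE _ _ _ _ hrest
        · exact Nc.OrI1 _ _ _ (Nc.hyp (by simp))
        · show Nc _ ((ClausetoPropF l).Disj (CNFtoPropF (c :: cs)))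
          exact Nc.OrI2 _ _ _ (Nc.AndI _ _ _
            (Nc.hyp (by simp)) (Nc.hyp (by simp [CNFtoPropF])))

theorem disjunct_ok (ll1 ll2 : CNF V) (Γ : List (PropF V)) :
    Nc Γ ((CNFtoPropF (Disjunct ll1 ll2)).Impl ((CNFtoPropF ll1).Disj (CNFtoPropF ll2))) := by
  induction ll1 generalizing Γ with
  | nil =>
      apply Nc.ImpI
      exact Nc.OrI1 _ _ _ (Nc.top _)
  | cons l ls ih =>
      apply Nc.ImpI
      have heq : Disjunct (l :: ls) ll2 = AddClause l ll2 ++ Disjunct ls ll2 := by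
        simp [Disjunct]
      have hconj : Nc (CNFtoPropF (Disjunct (l :: ls) ll2) :: Γ)
          ((CNFtoPropF (AddClause l ll2)).Conj (CNFtoPropF (Disjunct ls ll2))) :=
        Nc.ImpE _ _ _ (cnf_append _ _ _) (Nc.hyp (by rw [heq]; simp))
      have h1 := Nc.ImpE _ _ _ (addclause l ll2 _) (Nc.AndE1 _ _ _ hconj)
      have h2 := Nc.ImpE _ _ _ (ih _) (Nc.AndE2 _ _ _ hconj)
      apply Nc.OrE _ _ _ _ h2
      · -- CNFtoPropF ls holds
        apply Nc.OrE _ _ _ _ (h1.weak (List.subset_cons_self _ _))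
        · show Nc _ ((CNFtoPropF (l :: ls)).Disj (CNFtoPropF ll2))
          exact Nc.OrI1 _ _ _ (Nc.AndI _ _ _
            (Nc.hyp (by simp)) (Nc.hyp (by simp [CNFtoPropF])))
        · exact Nc.OrI2 _ _ _ (Nc.hyp (by simp [CNFtoPropF]))
      · exact Nc.OrI2 _ _ _ (Nc.hyp (by simp [CNFtoPropF]))

theorem single_clause (L : Lit V) (Γ : List (PropF V)) :
    Nc Γ ((CNFtoPropF [[L]]).Impl (LiteraltoPropF L)) := by
  apply Nc.ImpI
  have h0 : Nc (CNFtoPropF [[L]] :: Γ)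
      (((LiteraltoPropF L).Disj PropF.Bot).Conj PropF.Top) :=
    Nc.hyp (by simp [CNFtoPropF])
  have h := Nc.AndE1 _ _ _ h0
  apply Nc.OrE _ _ _ _ h
  · exact Nc.hyp (by simp)
  · exact Nc.efq (Nc.hyp (by simp))

theorem cnf_correct (B : NNF V) (Γ : List (PropF V)) :
    Nc Γ ((CNFtoPropF (MakeCNF B)).Impl (NNFtoPropF B)) := by
  induction B generalizing Γ with
  | NPos p => exact single_clause (.LPos p) Γ
  | NNeg p => exact single_clause (.LNeg p) Γ
  | NBot => exact single_clause .LBot Γ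
  | NTop => exact single_clause .LTop Γ
  | NConj B C ihB ihC =>
      apply Nc.ImpI
      have h : Nc (CNFtoPropF (MakeCNF (B.NConj C)) :: Γ)
          ((CNFtoPropF (MakeCNF B)).Conj (CNFtoPropF (MakeCNF C))) :=
        Nc.ImpE _ _ _ (cnf_append _ _ _) (Nc.hyp (by simp [MakeCNF]))
      exact Nc.AndI _ _ _ (Nc.ImpE _ _ _ (ihB _) (Nc.AndE1 _ _ _ h))
        (Nc.ImpE _ _ _ (ihC _) (Nc.AndE2 _ _ _ h))
  | NDisj B C ihB ihC =>
      apply Nc.ImpI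
      have h : Nc (CNFtoPropF (MakeCNF (B.NDisj C)) :: Γ)
          ((CNFtoPropF (MakeCNF B)).Disj (CNFtoPropF (MakeCNF C))) :=
        Nc.ImpE _ _ _ (disjunct_ok _ _ _) (Nc.hyp (by simp [MakeCNF]))
      apply Nc.OrE _ _ _ _ h
      · exact Nc.OrI1 _ _ _ (Nc.ImpE _ _ _ (ihB _) (Nc.hyp (by simp)))
      · exact Nc.OrI2 _ _ _ (Nc.ImpE _ _ _ (ihC _) (Nc.hyp (by simp)))

theorem nnf_ok (A : PropF V) :
    (∀ Γ : List (PropF V), Nc Γ ((NNFtoPropF (MakeNNF A)).Impl A)) ∧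
    (∀ Γ : List (PropF V), Nc Γ ((NNFtoPropF (MakeNNFN A)).Impl A.Neg)) := by
  induction A with
  | Var p =>
      constructor <;> intro Γ <;> exact Nc.ImpI _ _ _ (Nc.hyp (by simp [MakeNNF, MakeNNFN, NNFtoPropF]))
  | Bot =>
      constructor <;> intro Γ <;> exact Nc.ImpI _ _ _ (Nc.hyp (by simp [MakeNNF, MakeNNFN, NNFtoPropF, PropF.Top, PropF.Neg]))
  | Conj B C ihB ihC =>
      constructor <;> intro Γ
      · apply Nc.ImpI
        have h : Nc (NNFtoPropF (MakeNNF (B.Conj C)) :: Γ)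
            ((NNFtoPropF (MakeNNF B)).Conj (NNFtoPropF (MakeNNF C))) :=
          Nc.hyp (by simp [MakeNNF, NNFtoPropF])
        exact Nc.AndI _ _ _ (Nc.ImpE _ _ _ (ihB.1 _) (Nc.AndE1 _ _ _ h))
          (Nc.ImpE _ _ _ (ihC.1 _) (Nc.AndE2 _ _ _ h))
      · apply Nc.ImpI
        apply Nc.ImpI
        have h : Nc ((B.Conj C) :: NNFtoPropF (MakeNNFN (B.Conj C)) :: Γ)
            ((NNFtoPropF (MakeNNFN B)).Disj (NNFtoPropF (MakeNNFN C))) :=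
          Nc.hyp (by simp [MakeNNFN, NNFtoPropF])
        have hbc : Nc ((B.Conj C) :: NNFtoPropF (MakeNNFN (B.Conj C)) :: Γ) (B.Conj C) :=
          Nc.hyp (by simp)
        apply Nc.OrE _ _ _ _ h
        · exact Nc.ImpE _ _ _ (Nc.ImpE _ _ _ (ihB.2 _) (Nc.hyp (by simp)))
            (Nc.AndE1 _ _ _ (hbc.weak (List.subset_cons_self _ _)))
        · exact Nc.ImpE _ _ _ (Nc.ImpE _ _ _ (ihC.2 _) (Nc.hyp (by simp)))
            (Nc.AndE2 _ _ _ (hbc.weak (List.subset_cons_self _ _)))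
  | Disj B C ihB ihC =>
      constructor <;> intro Γ
      · apply Nc.ImpI
        have h : Nc (NNFtoPropF (MakeNNF (B.Disj C)) :: Γ)
            ((NNFtoPropF (MakeNNF B)).Disj (NNFtoPropF (MakeNNF C))) :=
          Nc.hyp (by simp [MakeNNF, NNFtoPropF])
        apply Nc.OrE _ _ _ _ h
        · exact Nc.OrI1 _ _ _ (Nc.ImpE _ _ _ (ihB.1 _) (Nc.hyp (by simp)))
        · exact Nc.OrI2 _ _ _ (Nc.ImpE _ _ _ (ihC.1 _) (Nc.hyp (by simp)))
      · apply Nc.ImpI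
        apply Nc.ImpI
        have hconj : Nc ((B.Disj C) :: NNFtoPropF (MakeNNFN (B.Disj C)) :: Γ)
            ((NNFtoPropF (MakeNNFN B)).Conj (NNFtoPropF (MakeNNFN C))) :=
          Nc.hyp (by simp [MakeNNFN, NNFtoPropF])
        apply Nc.OrE _ B C _ (Nc.hyp (by simp))
        · exact Nc.ImpE _ _ _
            (Nc.ImpE _ _ _ (ihB.2 _) (Nc.AndE1 _ _ _ (hconj.weak (List.subset_cons_self _ _))))
            (Nc.hyp (by simp))
        · exact Nc.ImpE _ _ _
            (Nc.ImpE _ _ _ (ihC.2 _) (Nc.AndE2 _ _ _ (hconj.weak (List.subset_cons_self _ _))))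
            (Nc.hyp (by simp))
  | Impl B C ihB ihC =>
      constructor <;> intro Γ
      · apply Nc.ImpI
        have h : Nc (NNFtoPropF (MakeNNF (B.Impl C)) :: Γ)
            ((NNFtoPropF (MakeNNFN B)).Disj (NNFtoPropF (MakeNNF C))) :=
          Nc.hyp (by simp [MakeNNF, NNFtoPropF])
        apply Nc.OrE _ _ _ _ h
        · apply Nc.ImpI
          apply Nc.efq
          exact Nc.ImpE _ _ _
            (Nc.ImpE _ _ _ (ihB.2 _) (Nc.hyp (by simp))) (Nc.hyp (by simp))
        · exact Nc.ImpI _ _ _ (Nc.ImpE _ _ _ (ihC.1 _) (Nc.hyp (by simp)))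
      · apply Nc.ImpI
        apply Nc.ImpI
        have hconj : Nc ((B.Impl C) :: NNFtoPropF (MakeNNFN (B.Impl C)) :: Γ)
            ((NNFtoPropF (MakeNNF B)).Conj (NNFtoPropF (MakeNNFN C))) :=
          Nc.hyp (by simp [MakeNNFN, NNFtoPropF])
        have hB : Nc ((B.Impl C) :: NNFtoPropF (MakeNNFN (B.Impl C)) :: Γ) B :=
          Nc.ImpE _ _ _ (ihB.1 _) (Nc.AndE1 _ _ _ hconj)
        have hC := Nc.ImpE _ _ _ (Nc.hyp List.mem_cons_self) hB
        exact Nc.ImpE _ _ _ (Nc.ImpE _ _ _ (ihC.2 _) (Nc.AndE2 _ _ _ hconj)) hC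

end Aux

theorem stmt19 {V : Type} [DecidableEq V] (A : PropF V)
    (h : Provable (CNFtoPropF (MakeCNF (MakeNNF A)))) : Provable A :=
  Nc.ImpE _ _ _ ((nnf_ok A).1 [])
    (Nc.ImpE _ _ _ (cnf_correct (MakeNNF A) []) h)
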